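/- Let f : Y → S be a finite morphism of schemes which is locally of finite presentation, and let σ : S → Y be a section of f (a morphism with f ∘ σ = id_S). Suppose that for every point s ∈ S the local ring of the scheme-theoretic fiber f^{-1}(s) = Y ×_S Spec κ(s) at the point corresponding to σ(s) is equal to the residue field κ(s), i.e., the canonical map κ(s) → 𝒪_{f^{-1}(s), σ(s)} is an isomorphism. Then the image σ(S) is an open subset of the underlying topological space of Y. -/

import Mathlib

open AlgebraicGeometry CategoryTheory

/-- Lemma 5.7, due to A. Ducros. Let `f : Y ⟶ S` be a finite morphism of
schemes, locally of finite presentation, and let `σ` be a section of `f`. If for every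
`s : S` the local ring of the scheme-theoretic fiber of `f` over `s` at the point `σ s` is
the residue field `κ(s)` — equivalently, the canonical map
`κ(s) = 𝒪_{S,s}/𝔪_s → 𝒪_{Y,σ(s)} / 𝔪_s·𝒪_{Y,σ(s)}` is bijective — then `σ(S)` is open
in `Y`. -/
theorem statement19 {Y S : Scheme} (f : Y ⟶ S) [IsFinite f] [LocallyOfFinitePresentation f]
    (σ : S ⟶ Y) (hσ : σ ≫ f = 𝟙 S)
    (hfib : ∀ s : S,
      Function.Bijective
        (Ideal.quotientMap
          (Ideal.map (f.stalkMap (σ.base s)).hom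
            (IsLocalRing.maximalIdeal (S.presheaf.stalk (f.base (σ.base s)))))
          (f.stalkMap (σ.base s)).hom
          Ideal.le_comap_map)) :
    IsOpen (Set.range σ.base) := by
  classical
  have hbase : ∀ t : S, f.base (σ.base t) = t := by
    intro t
    rw [← Scheme.Hom.comp_apply, hσ]
    rfl
  rw [isOpen_iff_forall_mem_open]
  rintro _ ⟨s, rfl⟩
  -- choose an affine open neighbourhood `U` of `s`
  obtain ⟨U, hU, hsU⟩ : ∃ U : S.Opens, IsAffineOpen U ∧ s ∈ U :=
    ⟨(S.affineCover.f (S.affineCover.idx s)).opensRange, isAffineOpen_opensRange _,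
      S.affineCover.covers s⟩
  have hV : IsAffineOpen (f ⁻¹ᵁ U) := hU.preimage f
  have hyV : σ.base s ∈ f ⁻¹ᵁ U := show f.base (σ.base s) ∈ U from (hbase s).symm ▸ hsU
  have hUle : U ≤ σ ⁻¹ᵁ f ⁻¹ᵁ U := fun x hx =>
    show f.base (σ.base x) ∈ U from (hbase x).symm ▸ hx
  -- the section-retraction pair on rings of sections
  have key : f.app U ≫ σ.appLE (f ⁻¹ᵁ U) U hUle = 𝟙 Γ(S, U) := by
    have h : (σ ≫ f).appLE U U hUle = f.app U ≫ σ.appLE (f ⁻¹ᵁ U) U hUle :=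
      Scheme.Hom.comp_appLE σ f U U hUle
    rw [← h]
    unfold Scheme.Hom.appLE
    rw [Scheme.Hom.congr_app hσ U, Scheme.Hom.id_app]
    erw [Category.id_comp]
    erw [← Functor.map_comp, ← op_comp]
    have hmap : ∀ (γ : U ⟶ U), S.presheaf.map γ.op = 𝟙 Γ(S, U) := fun γ => by
      rw [Subsingleton.elim γ (𝟙 U), op_id, S.presheaf.map_id]
    exact hmap _
  have hψφ : ∀ r : Γ(S, U), σ.appLE (f ⁻¹ᵁ U) U hUle (f.app U r) = r := fun r =>
    ConcreteCategory.congr_hom key r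
  -- `Γ(Y, f ⁻¹ᵁ U)` is a finite algebra over `Γ(S, U)`
  letI : Algebra Γ(S, U) Γ(Y, f ⁻¹ᵁ U) := (f.app U).hom.toAlgebra
  haveI hMF : Module.Finite Γ(S, U) Γ(Y, f ⁻¹ᵁ U) := IsFinite.finite_app f U hU
  -- the retraction as an algebra homomorphism
  let ψa : Γ(Y, f ⁻¹ᵁ U) →ₐ[Γ(S, U)] Γ(S, U) :=
    { toRingHom := (σ.appLE (f ⁻¹ᵁ U) U hUle).hom, commutes' := fun r => hψφ r }
  -- the kernel ideal of the retraction and its finite generation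
  set I : Ideal Γ(Y, f ⁻¹ᵁ U) := RingHom.ker (σ.appLE (f ⁻¹ᵁ U) U hUle).hom with hIdef
  have hIfg : I.FG := by
    have hkerrange : (LinearMap.ker ψa.toLinearMap : Submodule Γ(S, U) Γ(Y, f ⁻¹ᵁ U)) =
        LinearMap.range (LinearMap.id - (Algebra.linearMap Γ(S, U) Γ(Y, f ⁻¹ᵁ U)).comp
          ψa.toLinearMap) := by
      apply le_antisymm
      · intro x hx
        refine ⟨x, ?_⟩
        have hx0 : ψa x = 0 := hx
        simp [hx0]
      · rintro x ⟨b, rfl⟩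
        have : ψa (b - algebraMap Γ(S, U) Γ(Y, f ⁻¹ᵁ U) (ψa b)) = 0 := by
          simp
        simpa using this
    have hker_fg : (LinearMap.ker ψa.toLinearMap : Submodule Γ(S, U) Γ(Y, f ⁻¹ᵁ U)).FG := by
      rw [hkerrange, LinearMap.range_eq_map]
      exact Submodule.FG.map _ (Module.finite_def.mp hMF)
    obtain ⟨T, hT⟩ := hker_fg
    refine ⟨T, le_antisymm ?_ ?_⟩
    · rw [Ideal.span_le]
      intro t ht
      have : t ∈ LinearMap.ker ψa.toLinearMap := hT ▸ Submodule.subset_span ht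
      exact this
    · intro x hx
      have hx' : x ∈ Submodule.span Γ(S, U) (T : Set Γ(Y, f ⁻¹ᵁ U)) := by
        rw [hT]
        exact hx
      have hle : Submodule.span Γ(S, U) (T : Set Γ(Y, f ⁻¹ᵁ U)) ≤
          (Ideal.span (T : Set Γ(Y, f ⁻¹ᵁ U))).restrictScalars Γ(S, U) :=
        Submodule.span_le.mpr (fun t ht => Ideal.subset_span ht)
      exact hle hx'
  -- stalk-level data
  letI : Algebra Γ(Y, f ⁻¹ᵁ U) (Y.presheaf.stalk (σ.base s)) :=
    Y.presheaf.algebra_section_stalk ⟨σ.base s, hyV⟩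
  letI : Algebra Γ(S, U) (S.presheaf.stalk s) :=
    S.presheaf.algebra_section_stalk ⟨s, hsU⟩
  haveI hlocA : IsLocalization.AtPrime (Y.presheaf.stalk (σ.base s))
      (hV.primeIdealOf ⟨σ.base s, hyV⟩).asIdeal := hV.isLocalization_stalk ⟨σ.base s, hyV⟩
  haveI hlocR : IsLocalization.AtPrime (S.presheaf.stalk s)
      (hU.primeIdealOf ⟨s, hsU⟩).asIdeal := hU.isLocalization_stalk ⟨s, hsU⟩
  -- the composite of stalk maps is an isomorphism
  have hcomp : f.stalkMap (σ.base s) ≫ σ.stalkMap s =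
      (S.presheaf.stalkCongr (Inseparable.of_eq (hbase s))).hom := by
    have hc := Scheme.Hom.stalkMap_congr_hom (σ ≫ f) (𝟙 S) hσ s
    rw [Scheme.Hom.stalkMap_comp] at hc
    simp only [Scheme.Hom.stalkMap_id, Category.comp_id] at hc
    exact hc
  have hΨΦ : ∀ r, σ.stalkMap s (f.stalkMap (σ.base s) r) =
      (S.presheaf.stalkCongr (Inseparable.of_eq (hbase s))).hom r := fun r =>
    ConcreteCategory.congr_hom hcomp r
  -- the composite is bijective
  have hEbij : Function.Bijective
      ((S.presheaf.stalkCongr (Inseparable.of_eq (hbase s))).hom) :=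
    (S.presheaf.stalkCongr (Inseparable.of_eq (hbase s))).commRingCatIsoToRingEquiv.bijective
  -- surjectivity part of the fiber hypothesis
  have hsurj : ∀ a : Y.presheaf.stalk (σ.base s), ∃ r,
      a - f.stalkMap (σ.base s) r ∈ Ideal.map (f.stalkMap (σ.base s)).hom
        (IsLocalRing.maximalIdeal (S.presheaf.stalk (f.base (σ.base s)))) := by
    intro a
    obtain ⟨x, hx⟩ := (hfib s).2 (Ideal.Quotient.mk _ a)
    obtain ⟨r, rfl⟩ := Ideal.Quotient.mk_surjective x
    refine ⟨r, ?_⟩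
    rw [Ideal.quotientMap_mk] at hx
    exact Ideal.Quotient.eq.mp hx.symm
  -- the maximal ideal of the stalk of `Y`
  have hpAmA : Ideal.map (f.stalkMap (σ.base s)).hom
      (IsLocalRing.maximalIdeal (S.presheaf.stalk (f.base (σ.base s)))) ≤
      IsLocalRing.maximalIdeal (Y.presheaf.stalk (σ.base s)) := by
    rw [Ideal.map_le_iff_le_comap]
    intro x hx
    show f.stalkMap (σ.base s) x ∈ IsLocalRing.maximalIdeal _
    rw [IsLocalRing.mem_maximalIdeal, mem_nonunits_iff]
    intro hu
    exact mem_nonunits_iff.mp ((IsLocalRing.mem_maximalIdeal x).mp hx)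
      (IsLocalHom.map_nonunit x hu)
  -- germ compatibility for `σ`
  have hΨg : ∀ b : Γ(Y, f ⁻¹ᵁ U),
      σ.stalkMap s (algebraMap Γ(Y, f ⁻¹ᵁ U) (Y.presheaf.stalk (σ.base s)) b) =
        algebraMap Γ(S, U) (S.presheaf.stalk s) (σ.appLE (f ⁻¹ᵁ U) U hUle b) := by
    intro b
    show σ.stalkMap s (Y.presheaf.germ (f ⁻¹ᵁ U) (σ.base s) hyV b) =
      S.presheaf.germ U s hsU (σ.appLE (f ⁻¹ᵁ U) U hUle b)
    rw [Scheme.Hom.germ_stalkMap_apply σ (f ⁻¹ᵁ U) s hyV b]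
    exact (S.presheaf.germ_res_apply (homOfLE hUle) s hsU (σ.app (f ⁻¹ᵁ U) b)).symm
  -- germ compatibility for `f`
  have hΦg : ∀ r : Γ(S, U),
      f.stalkMap (σ.base s) (S.presheaf.germ U (f.base (σ.base s)) hyV r) =
        algebraMap Γ(Y, f ⁻¹ᵁ U) (Y.presheaf.stalk (σ.base s)) (f.app U r) := by
    intro r
    exact Scheme.Hom.germ_stalkMap_apply f U (σ.base s) hyV r
  -- transporting germs along the equality of points
  have hEg : ∀ r : Γ(S, U),
      (S.presheaf.stalkCongr (Inseparable.of_eq (hbase s))).hom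
        (S.presheaf.germ U (f.base (σ.base s)) hyV r) = S.presheaf.germ U s hsU r := by
    intro r
    show (S.presheaf.stalkCongr _).hom _ = _
    rw [TopCat.Presheaf.stalkCongr_hom]
    exact ConcreteCategory.congr_hom (S.presheaf.germ_stalkSpecializes hyV _) r
  -- units transfer along the stalk congruence
  have hEunit : ∀ z, IsUnit ((S.presheaf.stalkCongr
      (Inseparable.of_eq (hbase s))).hom z) → IsUnit z := by
    intro z hz
    have hzz : (S.presheaf.stalkCongr (Inseparable.of_eq (hbase s))).inv
        ((S.presheaf.stalkCongr (Inseparable.of_eq (hbase s))).hom z) = z := by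
      exact CategoryTheory.Iso.hom_inv_id_apply
        (S.presheaf.stalkCongr (Inseparable.of_eq (hbase s))) z
    rw [← hzz]
    exact hz.map ((S.presheaf.stalkCongr (Inseparable.of_eq (hbase s))).inv.hom)
  -- the image of `I` in the stalk at `σ s`
  set J : Ideal (Y.presheaf.stalk (σ.base s)) :=
    I.map (algebraMap Γ(Y, f ⁻¹ᵁ U) (Y.presheaf.stalk (σ.base s))) with hJdef
  have hJfg : J.FG := by
    obtain ⟨T, hT⟩ := hIfg
    exact ⟨T.image (algebraMap Γ(Y, f ⁻¹ᵁ U) (Y.presheaf.stalk (σ.base s))),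
      by rw [Finset.coe_image, ← Ideal.map_span, hT]⟩
  -- every element of `J` is killed by the retraction stalk map
  have hJker : J ≤ RingHom.ker (σ.stalkMap s).hom := by
    rw [hJdef, Ideal.map_le_iff_le_comap]
    intro t ht
    rw [Ideal.mem_comap, RingHom.mem_ker, hΨg t]
    have ht0 : σ.appLE (f ⁻¹ᵁ U) U hUle t = 0 := ht
    rw [ht0, map_zero]
  -- conversely, the kernel of the retraction stalk map is contained in `J`
  have hkerJ : ∀ x, σ.stalkMap s x = 0 → x ∈ J := by
    intro x hx
    obtain ⟨⟨b, u⟩, hbu⟩ := IsLocalization.surj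
      (M := (hV.primeIdealOf ⟨σ.base s, hyV⟩).asIdeal.primeCompl) x
    have h1 : σ.stalkMap s (algebraMap Γ(Y, f ⁻¹ᵁ U) (Y.presheaf.stalk (σ.base s)) b) = 0 := by
      rw [← hbu, map_mul, hx, zero_mul]
    have h2 : algebraMap Γ(S, U) (S.presheaf.stalk s) (σ.appLE (f ⁻¹ᵁ U) U hUle b) = 0 := by
      rw [← hΨg b, h1]
    obtain ⟨v, hv⟩ := (IsLocalization.map_eq_zero_iff
      (hU.primeIdealOf ⟨s, hsU⟩).asIdeal.primeCompl (S.presheaf.stalk s) _).mp h2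
    have hφvb : f.app U ↑v * b ∈ I := by
      show σ.appLE (f ⁻¹ᵁ U) U hUle (f.app U ↑v * b) = 0
      rw [map_mul, hψφ]
      exact hv
    have h3 : algebraMap Γ(Y, f ⁻¹ᵁ U) (Y.presheaf.stalk (σ.base s)) (f.app U ↑v * b) ∈ J :=
      Ideal.mem_map_of_mem _ hφvb
    rw [map_mul, ← hbu] at h3
    -- `algebraMap (f.app U v)` and `algebraMap u` are units
    have hu : IsUnit (algebraMap Γ(Y, f ⁻¹ᵁ U) (Y.presheaf.stalk (σ.base s)) ↑u) :=
      IsLocalization.map_units _ u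
    have hv' : IsUnit (algebraMap Γ(Y, f ⁻¹ᵁ U) (Y.presheaf.stalk (σ.base s)) (f.app U ↑v)) := by
      rw [← hΦg ↑v]
      refine IsUnit.map _ (hEunit _ ?_)
      rw [hEg ↑v]
      exact IsLocalization.map_units _ v
    obtain ⟨w, hw⟩ := hv'.mul hu
    have h4 : (↑w : Y.presheaf.stalk (σ.base s)) * x ∈ J := by
      have : algebraMap Γ(Y, f ⁻¹ᵁ U) (Y.presheaf.stalk (σ.base s)) (f.app U ↑v) *
          (x * algebraMap Γ(Y, f ⁻¹ᵁ U) (Y.presheaf.stalk (σ.base s)) ↑u) =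
          ↑w * x := by rw [hw]; ring
      rwa [this] at h3
    have := J.mul_mem_left ↑w⁻¹ h4
    rwa [← mul_assoc, Units.inv_mul, one_mul] at this
  -- `J` is contained in `𝔪_s · 𝒪_{Y,σ s}`
  have hJpA : J ≤ Ideal.map (f.stalkMap (σ.base s)).hom
      (IsLocalRing.maximalIdeal (S.presheaf.stalk (f.base (σ.base s)))) := by
    intro a ha
    obtain ⟨r, hr⟩ := hsurj a
    -- `r` lies in the maximal ideal
    have hz : a - f.stalkMap (σ.base s) r ∈
        IsLocalRing.maximalIdeal (Y.presheaf.stalk (σ.base s)) := hpAmA hr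
    have hΨa : σ.stalkMap s a = 0 := hJker ha
    have hrm : r ∈ IsLocalRing.maximalIdeal (S.presheaf.stalk (f.base (σ.base s))) := by
      rw [IsLocalRing.mem_maximalIdeal, mem_nonunits_iff]
      intro hru
      -- then `Ψ (Φ r)` is a unit, but it equals `-Ψ (a - Φ r)` which is not a unit
      have h1 : σ.stalkMap s (f.stalkMap (σ.base s) r) =
          - σ.stalkMap s (a - f.stalkMap (σ.base s) r) := by
        rw [map_sub, hΨa, zero_sub, neg_neg]
      have h2 : IsUnit (σ.stalkMap s (a - f.stalkMap (σ.base s) r)) := by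
        have h3 : IsUnit (σ.stalkMap s (f.stalkMap (σ.base s) r)) := by
          rw [hΨΦ]
          exact hru.map _
        rw [h1] at h3
        simpa using h3.neg
      have h4 : IsUnit (a - f.stalkMap (σ.base s) r) := IsLocalHom.map_nonunit _ h2
      exact mem_nonunits_iff.mp ((IsLocalRing.mem_maximalIdeal _).mp hz) h4
    have : a = (a - f.stalkMap (σ.base s) r) + f.stalkMap (σ.base s) r := by ring
    rw [this]
    exact Ideal.add_mem _ hr (Ideal.mem_map_of_mem _ hrm)
  -- key decomposition of elements of `𝔪_s · 𝒪_{Y,σ s}`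
  have hdecomp : ∀ a ∈ Ideal.map (f.stalkMap (σ.base s)).hom
      (IsLocalRing.maximalIdeal (S.presheaf.stalk (f.base (σ.base s)))),
      ∃ r ∈ IsLocalRing.maximalIdeal (S.presheaf.stalk (f.base (σ.base s))),
        a - f.stalkMap (σ.base s) r ∈
          IsLocalRing.maximalIdeal (Y.presheaf.stalk (σ.base s)) * J := by
    intro a ha
    have ha' : a ∈ Ideal.span ((f.stalkMap (σ.base s)) ''
        (IsLocalRing.maximalIdeal (S.presheaf.stalk (f.base (σ.base s))))) := ha
    refine Submodule.span_induction ?_ ?_ ?_ ?_ ha'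
    · rintro _ ⟨m₀, hm₀, rfl⟩
      exact ⟨m₀, hm₀, by simp⟩
    · exact ⟨0, zero_mem _, by simp⟩
    · rintro x y _ _ ⟨r₁, hr₁, hx⟩ ⟨r₂, hr₂, hy⟩
      refine ⟨r₁ + r₂, add_mem hr₁ hr₂, ?_⟩
      have hxy : x + y - f.stalkMap (σ.base s) (r₁ + r₂) =
          (x - f.stalkMap (σ.base s) r₁) + (y - f.stalkMap (σ.base s) r₂) := by
        rw [map_add]; ring
      rw [hxy]
      exact add_mem hx hy
    · rintro c x _ ⟨r, hr, hx⟩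
      obtain ⟨r₀, hr₀⟩ := hEbij.2 (σ.stalkMap s c)
      have hd : c - f.stalkMap (σ.base s) r₀ ∈ J := by
        refine hkerJ _ ?_
        rw [map_sub, hΨΦ, hr₀, sub_self]
      refine ⟨r₀ * r, Ideal.mul_mem_left _ r₀ hr, ?_⟩
      have hsmul : c • x - f.stalkMap (σ.base s) (r₀ * r) =
          c * (x - f.stalkMap (σ.base s) r) +
            f.stalkMap (σ.base s) r * (c - f.stalkMap (σ.base s) r₀) := by
        rw [map_mul, smul_eq_mul]; ring
      rw [hsmul]
      refine add_mem (Ideal.mul_mem_left _ c hx) ?_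
      exact Ideal.mul_mem_mul (hpAmA (Ideal.mem_map_of_mem _ hr)) hd
  -- Nakayama's lemma kills `J`
  have hJle : J ≤ IsLocalRing.maximalIdeal (Y.presheaf.stalk (σ.base s)) * J := by
    intro a ha
    obtain ⟨r, hr, hx⟩ := hdecomp a (hJpA ha)
    have hxJ : a - f.stalkMap (σ.base s) r ∈ J := Ideal.mul_le_right hx
    have h0 : σ.stalkMap s (f.stalkMap (σ.base s) r) = 0 := by
      have heq : f.stalkMap (σ.base s) r = a - (a - f.stalkMap (σ.base s) r) := by ring
      rw [heq, map_sub]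
      have h1 : σ.stalkMap s a = 0 := hJker ha
      have h2 : σ.stalkMap s (a - f.stalkMap (σ.base s) r) = 0 := hJker hxJ
      rw [h1, h2, sub_zero]
    have hr0 : r = 0 := by
      refine hEbij.1 ?_
      rw [← hΨΦ, h0, map_zero]
    rw [hr0, map_zero, sub_zero] at hx
    exact hx
  have hJbot : J = ⊥ := by
    refine Submodule.eq_bot_of_le_smul_of_le_jacobson_bot
      (IsLocalRing.maximalIdeal (Y.presheaf.stalk (σ.base s))) J hJfg ?_ ?_
    · rwa [Ideal.smul_eq_mul]
    · exact IsLocalRing.maximalIdeal_le_jacobson ⊥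
  -- every element of `I` is killed in the stalk
  have hI0 : ∀ t ∈ I, algebraMap Γ(Y, f ⁻¹ᵁ U) (Y.presheaf.stalk (σ.base s)) t = 0 := by
    intro t ht
    have : algebraMap Γ(Y, f ⁻¹ᵁ U) (Y.presheaf.stalk (σ.base s)) t ∈ J :=
      Ideal.mem_map_of_mem _ ht
    rwa [hJbot, Ideal.mem_bot] at this
  -- find a single annihilator `g` of `I` outside the prime of `σ s`
  obtain ⟨T, hT⟩ := hIfg
  have hTmem : ∀ t : {a // a ∈ T}, (t : Γ(Y, f ⁻¹ᵁ U)) ∈ I := fun t =>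
    hT ▸ Ideal.subset_span t.2
  choose cf hcf using fun t : {a // a ∈ T} =>
    (IsLocalization.map_eq_zero_iff (hV.primeIdealOf ⟨σ.base s, hyV⟩).asIdeal.primeCompl
      (Y.presheaf.stalk (σ.base s)) ↑t).mp (hI0 ↑t (hTmem t))
  set g : Γ(Y, f ⁻¹ᵁ U) := ∏ t ∈ T.attach, (cf t : Γ(Y, f ⁻¹ᵁ U)) with hgdef
  have hgcompl : g ∈ (hV.primeIdealOf ⟨σ.base s, hyV⟩).asIdeal.primeCompl :=
    Submonoid.prod_mem _ (fun t _ => (cf t).2)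
  have hgann : ∀ x ∈ I, g * x = 0 := by
    have hgT : ∀ t : {a // a ∈ T}, g * ↑t = 0 := by
      intro t
      obtain ⟨d, hd⟩ := Finset.dvd_prod_of_mem (fun t : {a // a ∈ T} =>
        (cf t : Γ(Y, f ⁻¹ᵁ U))) (Finset.mem_attach T t)
      calc g * ↑t = d * ((cf t : Γ(Y, f ⁻¹ᵁ U)) * ↑t) := by rw [hgdef, hd]; ring
      _ = 0 := by rw [hcf t, mul_zero]
    intro x hx
    have hx' : x ∈ Ideal.span (T : Set Γ(Y, f ⁻¹ᵁ U)) := hT.symm ▸ hx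
    refine Submodule.span_induction ?_ ?_ ?_ ?_ hx'
    · intro t ht
      exact hgT ⟨t, ht⟩
    · rw [mul_zero]
    · intro a b _ _ ha hb
      rw [mul_add, ha, hb, add_zero]
    · intro c a _ ha
      rw [smul_eq_mul, ← mul_assoc, mul_comm g c, mul_assoc, ha, mul_zero]
  -- the open neighbourhood of `σ s`
  refine ⟨hV.fromSpec.base '' (PrimeSpectrum.basicOpen g).1, ?_, ?_, ?_⟩
  · rintro _ ⟨q', hq', rfl⟩
    have hgq' : g ∉ q'.asIdeal := (PrimeSpectrum.mem_basicOpen g q').mp hq'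
    have hIq' : I ≤ q'.asIdeal := by
      intro x hx
      have h0 : g * x ∈ q'.asIdeal := by
        rw [hgann x hx]
        exact zero_mem _
      exact (q'.isPrime.mem_or_mem h0).resolve_left hgq'
    have hsurjψ : Function.Surjective (σ.appLE (f ⁻¹ᵁ U) U hUle) := fun r =>
      ⟨f.app U r, hψφ r⟩
    obtain ⟨p', hp'⟩ : q' ∈ Set.range (PrimeSpectrum.comap (σ.appLE (f ⁻¹ᵁ U) U hUle).hom) := by
      rw [range_comap_of_surjective _ _ hsurjψ]
      exact (PrimeSpectrum.mem_zeroLocus _ _).mpr hIq'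
    have hq'' : (Spec.map (σ.appLE (f ⁻¹ᵁ U) U hUle)).base p' = q' := hp'
    refine ⟨hU.fromSpec.base p', ?_⟩
    have h5 := IsAffineOpen.SpecMap_appLE_fromSpec σ hV hU hUle
    calc σ.base (hU.fromSpec.base p')
        = (hU.fromSpec ≫ σ).base p' := (Scheme.Hom.comp_apply _ _ _).symm
      _ = (Spec.map (σ.appLE (f ⁻¹ᵁ U) U hUle) ≫ hV.fromSpec).base p' := by rw [h5]
      _ = hV.fromSpec.base q' := (Scheme.Hom.comp_apply _ _ _).trans (congrArg _ hq'')
  · exact hV.fromSpec.isOpenEmbedding.isOpenMap _ (PrimeSpectrum.basicOpen g).2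
  · refine ⟨hV.primeIdealOf ⟨σ.base s, hyV⟩, ?_, hV.fromSpec_primeIdealOf ⟨σ.base s, hyV⟩⟩
    exact (PrimeSpectrum.mem_basicOpen g _).mpr hgcompl
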